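/- For every δ ∈ (0,1), the minimum over real m > 0 of the function m ↦ (√(m/2) / δ^{1/m}) · exp(−1/2 + 1/m) equals √(1 + log(1/δ)), and the minimum is attained at m* = 2·log(1/δ) + 2. -/

import Mathlib

/-- for `δ ∈ (0,1)`, the minimum over `m > 0` of
`√(m/2)/δ^{1/m} · exp(-1/2 + 1/m)` equals `√(1 + log(1/δ))`,
attained at `m* = 2 log(1/δ) + 2`. -/
theorem stmt_2 (δ : ℝ) (hδ : δ ∈ Set.Ioo (0 : ℝ) 1) :
    IsLeast
        ((fun m : ℝ => Real.sqrt (m / 2) / δ ^ (1 / m) * Real.exp (-1 / 2 + 1 / m)) ''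
          Set.Ioi 0)
        (Real.sqrt (1 + Real.log (1 / δ))) ∧
      (fun m : ℝ => Real.sqrt (m / 2) / δ ^ (1 / m) * Real.exp (-1 / 2 + 1 / m))
          (2 * Real.log (1 / δ) + 2) =
        Real.sqrt (1 + Real.log (1 / δ)) := by
  obtain ⟨hδ0, hδ1⟩ := hδ
  set a : ℝ := 1 - Real.log δ with ha
  have hlog : Real.log δ < 0 := Real.log_neg hδ0 hδ1
  have ha0 : (0:ℝ) < a := by simp only [ha]; linarith
  have hL : Real.log (1 / δ) = -Real.log δ := by
    rw [one_div, Real.log_inv]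
  have h1a : 1 + Real.log (1 / δ) = a := by rw [hL, ha]; ring
  have key : ∀ m : ℝ, 0 < m →
      Real.sqrt (m / 2) / δ ^ (1 / m) * Real.exp (-1 / 2 + 1 / m)
        = Real.sqrt (m / 2) * Real.exp (a / m - 1 / 2) := by
    intro m hm
    rw [Real.rpow_def_of_pos hδ0, div_eq_mul_inv, ← Real.exp_neg, mul_assoc, ← Real.exp_add]
    congr 1
    congr 1
    rw [ha]
    ring
  have hval : ∀ m : ℝ, 0 < m →
      Real.sqrt a ≤ Real.sqrt (m / 2) * Real.exp (a / m - 1 / 2) := by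
    intro m hm
    have h2 : Real.sqrt (m / 2) * Real.exp (a / m - 1 / 2)
        = Real.sqrt (m / 2 * Real.exp (2 * a / m - 1)) := by
      rw [Real.sqrt_mul (by positivity)]
      congr 1
      rw [show (2 * a / m - 1 : ℝ) = (a / m - 1 / 2) + (a / m - 1 / 2) by ring, Real.exp_add,
        Real.sqrt_mul_self (Real.exp_nonneg _)]
    rw [h2]
    apply Real.sqrt_le_sqrt
    have ht : 2 * a / m ≤ Real.exp (2 * a / m - 1) := by
      have := Real.add_one_le_exp (2 * a / m - 1)
      linarith
    calc a = m / 2 * (2 * a / m) := by field_simp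
      _ ≤ m / 2 * Real.exp (2 * a / m - 1) :=
          mul_le_mul_of_nonneg_left ht (by positivity)
  have hmstar : 2 * Real.log (1 / δ) + 2 = 2 * a := by rw [hL, ha]; ring
  have hattain : Real.sqrt ((2*a) / 2) / δ ^ (1 / (2*a)) * Real.exp (-1 / 2 + 1 / (2*a))
      = Real.sqrt (1 + Real.log (1 / δ)) := by
    rw [key (2*a) (by linarith), h1a]
    rw [show (2*a/2 : ℝ) = a by ring,
      show (a / (2*a) - 1/2 : ℝ) = 0 by field_simp; ring, Real.exp_zero, mul_one]
  refine ⟨⟨⟨2 * Real.log (1 / δ) + 2, ?_, ?_⟩, ?_⟩, ?_⟩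
  · simp only [Set.mem_Ioi]; rw [hL]; linarith
  · simp only [hmstar]; exact hattain
  · rintro x ⟨m, hm, rfl⟩
    simp only [Set.mem_Ioi] at hm
    rw [h1a]
    simp only []
    rw [key m hm]
    exact hval m hm
  · simp only [hmstar]; exact hattain
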